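/- (Recovery guarantee for HiIHT.) Let N₁, N₂, N₃ and s₁, s₂, s₃ be positive integers with 3s_k ≤ N_k for all k, let A ∈ ℂ^{m×N₁N₂N₃}, and suppose the hierarchical restricted isometry constant δ := δ_{(3s₁,3s₂,3s₃)}(A) satisfies δ < 1/√3. Let x ∈ ℂ^{N₁·N₂·N₃} be (s₁,s₂,s₃)-Hi-sparse, let z ∈ ℂ^m, and let y = Ax + z. Define a sequence by x⁽⁰⁾ = 0 and, for i ≥ 1: set x_temp = x⁽ⁱ⁻¹⁾ + Aᴴ(y − Ax⁽ⁱ⁻¹⁾), let S⁽ⁱ⁾ be the support of any minimizer of ‖x_temp − w‖ over all (s₁,s₂,s₃)-Hi-sparse vectors w ∈ ℂ^{N₁·N₂·N₃}, and set x⁽ⁱ⁾ equal to x_temp on S⁽ⁱ⁾ and zero elsewhere. Then for all i ≥ 0, ‖x − x⁽ⁱ⁾‖ ≤ κⁱ‖x‖ + τ‖z‖, where κ = √3·δ < 1 and τ = 2.18/(1−κ). -/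

import Mathlib

open scoped Classical

noncomputable section

/-- A vector is `s`-sparse if at most `s` of its entries are nonzero. -/
def Sparse {ι : Type*} [Fintype ι] (s : ℕ) (x : ι → ℂ) : Prop :=
  (Finset.univ.filter fun i => x i ≠ 0).card ≤ s

/-- Squared Euclidean norm. -/
def sqNorm {ι : Type*} [Fintype ι] (x : ι → ℂ) : ℝ := ∑ i, ‖x i‖ ^ 2

/-- Euclidean norm. -/
def eucNorm {ι : Type*} [Fintype ι] (x : ι → ℂ) : ℝ := Real.sqrt (sqNorm x)

/-- The restricted isometry constant `δ_s(A)`: the smallest `δ ≥ 0` such that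
`(1−δ)‖x‖² ≤ ‖Ax‖² ≤ (1+δ)‖x‖²` for every `s`-sparse `x`. -/
def RIPconst {m n : Type*} [Fintype m] [Fintype n] (A : Matrix m n ℂ) (s : ℕ) : ℝ :=
  sInf {δ : ℝ | 0 ≤ δ ∧ ∀ x : n → ℂ, Sparse s x →
    (1 - δ) * sqNorm x ≤ sqNorm (A.mulVec x) ∧ sqNorm (A.mulVec x) ≤ (1 + δ) * sqNorm x}

/-- `(s₁,s₂,s₃)`-hierarchical sparsity of a 3-level block vector: at most `s₁`
of the `N₁` level-1 blocks are nonzero, within each block at most `s₂` of the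
`N₂` level-2 blocks are nonzero, and each of those contains at most `s₃`
nonzero entries. -/
def HiSparse3 {N₁ N₂ N₃ : ℕ} (s₁ s₂ s₃ : ℕ) (x : Fin N₁ × Fin N₂ × Fin N₃ → ℂ) : Prop :=
  (Finset.univ.filter fun i₁ : Fin N₁ => (fun p : Fin N₂ × Fin N₃ => x (i₁, p)) ≠ 0).card ≤ s₁ ∧
  ∀ i₁ : Fin N₁,
    (Finset.univ.filter fun i₂ : Fin N₂ => (fun i₃ : Fin N₃ => x (i₁, i₂, i₃)) ≠ 0).card ≤ s₂ ∧
    ∀ i₂ : Fin N₂, Sparse s₃ (fun i₃ : Fin N₃ => x (i₁, i₂, i₃))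

/-- The hierarchical restricted isometry constant `δ_{(s₁,s₂,s₃)}(A)` of a
matrix acting on 3-level block vectors. -/
def HiRIPconst3 {m : Type*} [Fintype m] {N₁ N₂ N₃ : ℕ}
    (A : Matrix m (Fin N₁ × Fin N₂ × Fin N₃) ℂ) (s₁ s₂ s₃ : ℕ) : ℝ :=
  sInf {δ : ℝ | 0 ≤ δ ∧ ∀ x : Fin N₁ × Fin N₂ × Fin N₃ → ℂ, HiSparse3 s₁ s₂ s₃ x →
    (1 - δ) * sqNorm x ≤ sqNorm (A.mulVec x) ∧ sqNorm (A.mulVec x) ≤ (1 + δ) * sqNorm x}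

set_option maxHeartbeats 1000000

namespace HiAux
variable {ι κ : Type*} [Fintype ι] [Fintype κ]

def toE (x : ι → ℂ) : EuclideanSpace ℂ ι := (WithLp.equiv 2 (ι → ℂ)).symm x

lemma enorm_eq (x : ι → ℂ) : eucNorm x = ‖toE x‖ := by
  rw [EuclideanSpace.norm_eq]; rfl

lemma toE_add (x y : ι → ℂ) : toE (x + y) = toE x + toE y := rfl
lemma toE_sub (x y : ι → ℂ) : toE (x - y) = toE x - toE y := rfl
lemma toE_smul (c : ℂ) (x : ι → ℂ) : toE (c • x) = c • toE x := rfl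

def rdot (x y : ι → ℂ) : ℝ := (∑ i, (starRingEnd ℂ) (x i) * y i).re

lemma rdot_eq (x y : ι → ℂ) : rdot x y = RCLike.re (inner ℂ (toE x) (toE y) : ℂ) := by
  rw [PiLp.inner_apply]; simp [rdot, toE, RCLike.inner_apply, mul_comm]

lemma sqNorm_nonneg (x : ι → ℂ) : 0 ≤ sqNorm x :=
  Finset.sum_nonneg fun i _ => sq_nonneg _

lemma enorm_nonneg (x : ι → ℂ) : 0 ≤ eucNorm x := Real.sqrt_nonneg _

lemma enorm_sq (x : ι → ℂ) : eucNorm x ^ 2 = sqNorm x :=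
  Real.sq_sqrt (sqNorm_nonneg x)

lemma sqNorm_eq (x : ι → ℂ) : sqNorm x = ‖toE x‖ ^ 2 := by
  rw [← enorm_sq, enorm_eq]

lemma sqNorm_eq_zero {x : ι → ℂ} (h : sqNorm x = 0) : x = 0 := by
  have := (norm_eq_zero (a := toE x)).1 (by
    have := sqNorm_eq x
    nlinarith [norm_nonneg (toE x)])
  funext i; have := congrArg (fun v => v i) this; simpa [toE] using this

lemma enorm_add_le (x y : ι → ℂ) : eucNorm (x + y) ≤ eucNorm x + eucNorm y := by
  rw [enorm_eq, enorm_eq, enorm_eq, toE_add]; exact norm_add_le _ _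

lemma abs_rdot_le (x y : ι → ℂ) : |rdot x y| ≤ eucNorm x * eucNorm y := by
  rw [rdot_eq, enorm_eq, enorm_eq]
  exact (RCLike.abs_re_le_norm _).trans (norm_inner_le_norm _ _)

lemma rdot_le (x y : ι → ℂ) : rdot x y ≤ eucNorm x * eucNorm y :=
  (le_abs_self _).trans (abs_rdot_le x y)

lemma rdot_polar (x y : ι → ℂ) :
    rdot x y = (sqNorm (x + y) - sqNorm (x - y)) / 4 := by
  rw [rdot_eq, sqNorm_eq, sqNorm_eq, toE_add, toE_sub]
  rw [re_inner_eq_norm_add_mul_self_sub_norm_sub_mul_self_div_four]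
  ring

lemma parallelogram (x y : ι → ℂ) :
    sqNorm (x + y) + sqNorm (x - y) = 2 * (sqNorm x + sqNorm y) := by
  rw [sqNorm_eq, sqNorm_eq, sqNorm_eq, sqNorm_eq, toE_add, toE_sub]
  have := parallelogram_law_with_norm ℂ (toE x) (toE y)
  nlinarith [norm_nonneg (toE x + toE y)]

lemma sqNorm_smul (c : ℝ) (x : ι → ℂ) : sqNorm ((c : ℂ) • x) = c ^ 2 * sqNorm x := by
  rw [sqNorm_eq, sqNorm_eq, toE_smul, norm_smul]
  simp [mul_pow]

lemma enorm_smul (c : ℝ) (x : ι → ℂ) : eucNorm ((c : ℂ) • x) = |c| * eucNorm x := by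
  rw [enorm_eq, enorm_eq, toE_smul, norm_smul]
  simp [Complex.norm_real]

lemma rdot_smul_left (c : ℝ) (x y : ι → ℂ) :
    rdot ((c : ℂ) • x) y = c * rdot x y := by
  rw [rdot_eq, rdot_eq, toE_smul, inner_smul_left]
  simp

lemma rdot_smul_right (c : ℝ) (x y : ι → ℂ) :
    rdot x ((c : ℂ) • y) = c * rdot x y := by
  rw [rdot_eq, rdot_eq, toE_smul, inner_smul_right]
  simp

lemma rdot_sub_right (x y z : ι → ℂ) : rdot x (y - z) = rdot x y - rdot x z := by
  rw [rdot_eq, rdot_eq, rdot_eq, toE_sub, inner_sub_right]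
  simp

lemma rdot_self (x : ι → ℂ) : rdot x x = sqNorm x := by
  rw [rdot_eq, sqNorm_eq]
  exact inner_self_eq_norm_sq (𝕜 := ℂ) (toE x)

lemma rdot_adjoint (A : Matrix κ ι ℂ) (w : ι → ℂ) (z : κ → ℂ) :
    rdot w (A.conjTranspose.mulVec z) = rdot (A.mulVec w) z := by
  unfold rdot
  congr 1
  simp only [Matrix.mulVec, dotProduct, Matrix.conjTranspose_apply, Finset.mul_sum,
    Finset.sum_mul, map_sum, map_mul]
  rw [Finset.sum_comm]
  congr 1; ext i; congr 1; ext j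
  simp only [RingHom.coe_coe, Complex.star_def]
  ring

end HiAux

namespace HiAux
variable {ι κ : Type*} [Fintype ι] [Fintype κ]

lemma rdot_zero_left (y : ι → ℂ) : rdot 0 y = 0 := by
  unfold rdot; simp

lemma rdot_zero_right (y : ι → ℂ) : rdot y 0 = 0 := by
  unfold rdot; simp

lemma enorm_sub_le (x y : ι → ℂ) : eucNorm (x - y) ≤ eucNorm x + eucNorm y := by
  rw [enorm_eq, enorm_eq, enorm_eq, toE_sub]; exact norm_sub_le _ _

lemma rdot_congr_right {w g g' : ι → ℂ} (h : ∀ j, w j ≠ 0 → g j = g' j) :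
    rdot w g = rdot w g' := by
  unfold rdot
  congr 1
  refine Finset.sum_congr rfl fun j _ => ?_
  by_cases hw : w j = 0
  · simp [hw]
  · rw [h j hw]

lemma rip_upper {A : Matrix κ ι ℂ} {P : (ι → ℂ) → Prop} {δ : ℝ} (hδ0 : 0 ≤ δ)
    (hRIP : ∀ v, P v → sqNorm (A.mulVec v) ≤ (1 + δ) * sqNorm v)
    {v : ι → ℂ} (hv : P v) :
    eucNorm (A.mulVec v) ≤ Real.sqrt (1 + δ) * eucNorm v := by
  have h1 : (0:ℝ) ≤ 1 + δ := by linarith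
  rw [eucNorm, eucNorm, ← Real.sqrt_mul h1]
  exact Real.sqrt_le_sqrt (hRIP v hv)

lemma rip_inner {A : Matrix κ ι ℂ} {P : (ι → ℂ) → Prop} {δ : ℝ}
    (hRIP : ∀ v, P v → (1 - δ) * sqNorm v ≤ sqNorm (A.mulVec v) ∧
      sqNorm (A.mulVec v) ≤ (1 + δ) * sqNorm v)
    {u v : ι → ℂ} (hcomb : ∀ c d : ℝ, P ((c : ℂ) • u + (d : ℂ) • v)) :
    |rdot u v - rdot (A.mulVec u) (A.mulVec v)| ≤ δ * eucNorm u * eucNorm v := by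
  have habs : ∀ w, P w → |sqNorm (A.mulVec w) - sqNorm w| ≤ δ * sqNorm w := by
    intro w hw
    have := hRIP w hw
    rw [abs_le]
    constructor <;> nlinarith [this.1, this.2]
  by_cases hu : sqNorm u = 0
  · have : u = 0 := sqNorm_eq_zero hu
    subst this
    have e0 : eucNorm (0 : ι → ℂ) = 0 := by rw [eucNorm, hu, Real.sqrt_zero]
    rw [rdot_zero_left, Matrix.mulVec_zero, rdot_zero_left, sub_zero, abs_zero, e0]
    simp
  by_cases hv : sqNorm v = 0
  · have : v = 0 := sqNorm_eq_zero hv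
    subst this
    have e0 : eucNorm (0 : ι → ℂ) = 0 := by rw [eucNorm, hv, Real.sqrt_zero]
    rw [rdot_zero_right, Matrix.mulVec_zero, rdot_zero_right, sub_zero, abs_zero, e0]
    simp
  have hu0 : 0 < eucNorm u := by
    rcases lt_or_eq_of_le (enorm_nonneg u) with h | h
    · exact h
    · exact absurd (by rw [← enorm_sq, ← h]; ring) hu
  have hv0 : 0 < eucNorm v := by
    rcases lt_or_eq_of_le (enorm_nonneg v) with h | h
    · exact h
    · exact absurd (by rw [← enorm_sq, ← h]; ring) hv
  set cu : ℝ := (eucNorm u)⁻¹ with hcu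
  set cv : ℝ := (eucNorm v)⁻¹ with hcv
  set u' : ι → ℂ := (cu : ℂ) • u with hu'
  set v' : ι → ℂ := (cv : ℂ) • v with hv'
  have hsqu' : sqNorm u' = 1 := by
    rw [hu', sqNorm_smul, ← enorm_sq, hcu]
    field_simp
  have hsqv' : sqNorm v' = 1 := by
    rw [hv', sqNorm_smul, ← enorm_sq, hcv]
    field_simp
  have hPp : P (u' + v') := hcomb cu cv
  have hPm : P (u' - v') := by
    have : u' - v' = (cu : ℂ) • u + ((-cv : ℝ) : ℂ) • v := by
      rw [hu', hv']
      push_cast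
      module
    rw [this]
    exact hcomb cu (-cv)
  -- polarization
  have hApol : rdot (A.mulVec u') (A.mulVec v')
      = (sqNorm (A.mulVec (u' + v')) - sqNorm (A.mulVec (u' - v'))) / 4 := by
    rw [Matrix.mulVec_add, Matrix.mulVec_sub]
    exact rdot_polar _ _
  have hpol := rdot_polar u' v'
  have hpar := parallelogram u' v'
  have h1 := habs _ hPp
  have h2 := habs _ hPm
  have hkey : |rdot u' v' - rdot (A.mulVec u') (A.mulVec v')| ≤ δ := by
    rw [hpol, hApol]
    rw [abs_le] at h1 h2 ⊢
    constructor <;> nlinarith [h1.1, h1.2, h2.1, h2.2]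
  have hscale : rdot u' v' = cu * cv * rdot u v := by
    rw [hu', hv', rdot_smul_left, rdot_smul_right]; ring
  have hAscale : rdot (A.mulVec u') (A.mulVec v') = cu * cv * rdot (A.mulVec u) (A.mulVec v) := by
    rw [hu', hv', Matrix.mulVec_smul, Matrix.mulVec_smul, rdot_smul_left, rdot_smul_right]; ring
  rw [hscale, hAscale, ← mul_sub, abs_mul] at hkey
  have hcupos : 0 < cu ∧ 0 < cv := ⟨inv_pos.2 hu0, inv_pos.2 hv0⟩
  rw [abs_of_pos (mul_pos hcupos.1 hcupos.2)] at hkey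
  have : |rdot u v - rdot (A.mulVec u) (A.mulVec v)| ≤ δ / (cu * cv) := by
    rw [le_div_iff₀ (mul_pos hcupos.1 hcupos.2)]
    linarith [hkey]
  have hdiv : δ / (cu * cv) = δ * eucNorm u * eucNorm v := by
    rw [hcu, hcv]
    field_simp
  linarith [this, hdiv.le, hdiv.ge]
end HiAux

namespace HiAux

lemma hiSparse_mono {N₁ N₂ N₃ s₁ s₂ s₃ : ℕ} {a v : Fin N₁ × Fin N₂ × Fin N₃ → ℂ}
    (ha : HiSparse3 s₁ s₂ s₃ a) (h : ∀ j, v j ≠ 0 → a j ≠ 0) :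
    HiSparse3 s₁ s₂ s₃ v := by
  obtain ⟨h1, h2⟩ := ha
  refine ⟨le_trans (Finset.card_le_card fun i₁ hi => ?_) h1, fun i₁ =>
    ⟨le_trans (Finset.card_le_card fun i₂ hi => ?_) (h2 i₁).1, fun i₂ =>
      le_trans (Finset.card_le_card fun i₃ hi => ?_) ((h2 i₁).2 i₂)⟩⟩
  · simp only [Finset.mem_filter, Finset.mem_univ, true_and, Function.ne_iff] at hi ⊢
    obtain ⟨p, hp⟩ := hi
    exact ⟨p, h _ hp⟩
  · simp only [Finset.mem_filter, Finset.mem_univ, true_and, Function.ne_iff] at hi ⊢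
    obtain ⟨p, hp⟩ := hi
    exact ⟨p, h _ hp⟩
  · simp only [Finset.mem_filter, Finset.mem_univ, true_and] at hi ⊢
    exact h _ hi

end HiAux

namespace HiAux

lemma hiSparse_union3 {N₁ N₂ N₃ s₁ s₂ s₃ : ℕ} {a b c v : Fin N₁ × Fin N₂ × Fin N₃ → ℂ}
    (ha : HiSparse3 s₁ s₂ s₃ a) (hb : HiSparse3 s₁ s₂ s₃ b) (hc : HiSparse3 s₁ s₂ s₃ c)
    (h : ∀ j, v j ≠ 0 → a j ≠ 0 ∨ b j ≠ 0 ∨ c j ≠ 0) :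
    HiSparse3 (3 * s₁) (3 * s₂) (3 * s₃) v := by
  obtain ⟨ha1, ha2⟩ := ha
  obtain ⟨hb1, hb2⟩ := hb
  obtain ⟨hc1, hc2⟩ := hc
  refine ⟨?_, fun i₁ => ⟨?_, fun i₂ => ?_⟩⟩
  · have hsub := Finset.card_le_card (s := Finset.univ.filter fun i₁ : Fin N₁ =>
        (fun p : Fin N₂ × Fin N₃ => v (i₁, p)) ≠ 0)
      (t := ((Finset.univ.filter fun i₁ : Fin N₁ => (fun p : Fin N₂ × Fin N₃ => a (i₁, p)) ≠ 0) ∪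
          (Finset.univ.filter fun i₁ : Fin N₁ => (fun p : Fin N₂ × Fin N₃ => b (i₁, p)) ≠ 0)) ∪
          (Finset.univ.filter fun i₁ : Fin N₁ => (fun p : Fin N₂ × Fin N₃ => c (i₁, p)) ≠ 0))
      (by
        intro i₁ hi
        simp only [Finset.mem_filter, Finset.mem_univ, true_and, Finset.mem_union,
          Function.ne_iff] at hi ⊢
        obtain ⟨p, hp⟩ := hi
        rcases h _ hp with h' | h' | h'
        · exact Or.inl (Or.inl ⟨p, h'⟩)
        · exact Or.inl (Or.inr ⟨p, h'⟩)
        · exact Or.inr ⟨p, h'⟩)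
    have := hsub.trans ((Finset.card_union_le _ _).trans
      (Nat.add_le_add_right (Finset.card_union_le _ _) _))
    omega
  · have hsub := Finset.card_le_card (s := Finset.univ.filter fun i₂ : Fin N₂ =>
        (fun i₃ : Fin N₃ => v (i₁, i₂, i₃)) ≠ 0)
      (t := ((Finset.univ.filter fun i₂ : Fin N₂ => (fun i₃ : Fin N₃ => a (i₁, i₂, i₃)) ≠ 0) ∪
          (Finset.univ.filter fun i₂ : Fin N₂ => (fun i₃ : Fin N₃ => b (i₁, i₂, i₃)) ≠ 0)) ∪
          (Finset.univ.filter fun i₂ : Fin N₂ => (fun i₃ : Fin N₃ => c (i₁, i₂, i₃)) ≠ 0))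
      (by
        intro i₂ hi
        simp only [Finset.mem_filter, Finset.mem_univ, true_and, Finset.mem_union,
          Function.ne_iff] at hi ⊢
        obtain ⟨p, hp⟩ := hi
        rcases h _ hp with h' | h' | h'
        · exact Or.inl (Or.inl ⟨p, h'⟩)
        · exact Or.inl (Or.inr ⟨p, h'⟩)
        · exact Or.inr ⟨p, h'⟩)
    have := hsub.trans ((Finset.card_union_le _ _).trans
      (Nat.add_le_add_right (Finset.card_union_le _ _) _))
    have := (ha2 i₁).1; have := (hb2 i₁).1; have := (hc2 i₁).1
    omega
  · have hsub := Finset.card_le_card (s := Finset.univ.filter fun i₃ : Fin N₃ =>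
        v (i₁, i₂, i₃) ≠ 0)
      (t := ((Finset.univ.filter fun i₃ : Fin N₃ => a (i₁, i₂, i₃) ≠ 0) ∪
          (Finset.univ.filter fun i₃ : Fin N₃ => b (i₁, i₂, i₃) ≠ 0)) ∪
          (Finset.univ.filter fun i₃ : Fin N₃ => c (i₁, i₂, i₃) ≠ 0))
      (by
        intro i₃ hi
        simp only [Finset.mem_filter, Finset.mem_univ, true_and, Finset.mem_union] at hi ⊢
        rcases h _ hi with h' | h' | h'
        · exact Or.inl (Or.inl h')
        · exact Or.inl (Or.inr h')
        · exact Or.inr h')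
    have := hsub.trans ((Finset.card_union_le _ _).trans
      (Nat.add_le_add_right (Finset.card_union_le _ _) _))
    have hA : (Finset.univ.filter fun i₃ : Fin N₃ => a (i₁, i₂, i₃) ≠ 0).card ≤ s₃ :=
      (ha2 i₁).2 i₂
    have hB : (Finset.univ.filter fun i₃ : Fin N₃ => b (i₁, i₂, i₃) ≠ 0).card ≤ s₃ :=
      (hb2 i₁).2 i₂
    have hC : (Finset.univ.filter fun i₃ : Fin N₃ => c (i₁, i₂, i₃) ≠ 0).card ≤ s₃ :=
      (hc2 i₁).2 i₂
    show (Finset.univ.filter fun i₃ : Fin N₃ => v (i₁, i₂, i₃) ≠ 0).card ≤ 3 * s₃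
    omega

end HiAux

namespace HiAux
open scoped Matrix.Norms.L2Operator in
lemma hiRIP_mem {m N₁ N₂ N₃ : ℕ} (A : Matrix (Fin m) (Fin N₁ × Fin N₂ × Fin N₃) ℂ)
    (s₁ s₂ s₃ : ℕ) :
    0 ≤ HiRIPconst3 A s₁ s₂ s₃ ∧
      ∀ v : Fin N₁ × Fin N₂ × Fin N₃ → ℂ, HiSparse3 s₁ s₂ s₃ v →
        (1 - HiRIPconst3 A s₁ s₂ s₃) * sqNorm v ≤ sqNorm (A.mulVec v) ∧
          sqNorm (A.mulVec v) ≤ (1 + HiRIPconst3 A s₁ s₂ s₃) * sqNorm v := by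
  set D : Set ℝ := {δ : ℝ | 0 ≤ δ ∧ ∀ x : Fin N₁ × Fin N₂ × Fin N₃ → ℂ, HiSparse3 s₁ s₂ s₃ x →
    (1 - δ) * sqNorm x ≤ sqNorm (A.mulVec x) ∧ sqNorm (A.mulVec x) ≤ (1 + δ) * sqNorm x} with hD
  have hmem : HiRIPconst3 A s₁ s₂ s₃ ∈ D := by
    have hne : D.Nonempty := by
      refine ⟨‖A‖ * ‖A‖ + 1, by positivity, fun v _ => ?_⟩
      have hub : sqNorm (A.mulVec v) ≤ (‖A‖ * ‖A‖) * sqNorm v := by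
        rw [sqNorm_eq, sqNorm_eq]
        have h1 : ‖toE (A.mulVec v)‖ ≤ ‖A‖ * ‖toE v‖ := A.l2_opNorm_mulVec (toE v)
        have h2 : (0:ℝ) ≤ ‖toE (A.mulVec v)‖ := norm_nonneg _
        nlinarith [norm_nonneg (toE v), norm_nonneg A]
      constructor
      · have : (1 - (‖A‖ * ‖A‖ + 1)) * sqNorm v ≤ 0 := by
          have := sqNorm_nonneg v
          nlinarith [norm_nonneg A]
        exact this.trans (sqNorm_nonneg _)
      · nlinarith [sqNorm_nonneg v]
    have hbdd : BddBelow D := ⟨0, fun δ hδ => hδ.1⟩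
    have hclosed : IsClosed D := by
      have : D = Set.Ici (0:ℝ) ∩ ⋂ (v : Fin N₁ × Fin N₂ × Fin N₃ → ℂ)
          (_ : HiSparse3 s₁ s₂ s₃ v),
          ({δ : ℝ | (1 - δ) * sqNorm v ≤ sqNorm (A.mulVec v)} ∩
            {δ : ℝ | sqNorm (A.mulVec v) ≤ (1 + δ) * sqNorm v}) := by
        ext δ
        simp only [hD, Set.mem_setOf_eq, Set.mem_inter_iff, Set.mem_Ici, Set.mem_iInter]
      rw [this]
      refine isClosed_Ici.inter (isClosed_iInter fun v => isClosed_iInter fun _ =>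
        IsClosed.inter ?_ ?_)
      · exact isClosed_le (by fun_prop) continuous_const
      · exact isClosed_le continuous_const (by fun_prop)
    exact hclosed.csInf_mem hne hbdd
  exact ⟨hmem.1, hmem.2⟩
end HiAux

open HiAux

/-- **Recovery guarantee for HiIHT.**  If the sensing matrix `A`
satisfies `δ := δ_{(3s₁,3s₂,3s₃)}(A) < 1/√3`, then for any `(s₁,s₂,s₃)`-Hi-sparse
`x`, noise `z` and measurements `y = Ax + z`, the HiIHT iterates `xs i`
(starting from `0`, with gradient step followed by projection onto the support
of a best Hi-sparse approximation) satisfy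
`‖x − xs i‖ ≤ κ^i ‖x‖ + τ ‖z‖` with `κ = √3·δ < 1` and `τ = 2.18/(1−κ)`. -/
theorem hiIHT_recovery (m N₁ N₂ N₃ s₁ s₂ s₃ : ℕ)
    (hs₁ : 0 < s₁) (hs₂ : 0 < s₂) (hs₃ : 0 < s₃)
    (hN₁ : 3 * s₁ ≤ N₁) (hN₂ : 3 * s₂ ≤ N₂) (hN₃ : 3 * s₃ ≤ N₃)
    (A : Matrix (Fin m) (Fin N₁ × Fin N₂ × Fin N₃) ℂ)
    (hδ : HiRIPconst3 A (3 * s₁) (3 * s₂) (3 * s₃) < 1 / Real.sqrt 3)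
    (x : Fin N₁ × Fin N₂ × Fin N₃ → ℂ) (hx : HiSparse3 s₁ s₂ s₃ x)
    (z : Fin m → ℂ) (y : Fin m → ℂ) (hy : y = A.mulVec x + z)
    (xs : ℕ → (Fin N₁ × Fin N₂ × Fin N₃ → ℂ))
    (h0 : xs 0 = 0)
    (hstep : ∀ i : ℕ,
      ∃ w : Fin N₁ × Fin N₂ × Fin N₃ → ℂ, HiSparse3 s₁ s₂ s₃ w ∧
        (∀ w' : Fin N₁ × Fin N₂ × Fin N₃ → ℂ, HiSparse3 s₁ s₂ s₃ w' →
          eucNorm ((xs i + A.conjTranspose.mulVec (y - A.mulVec (xs i))) - w) ≤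
            eucNorm ((xs i + A.conjTranspose.mulVec (y - A.mulVec (xs i))) - w')) ∧
        xs (i + 1) = fun j =>
          if w j ≠ 0 then (xs i + A.conjTranspose.mulVec (y - A.mulVec (xs i))) j else 0) :
    Real.sqrt 3 * HiRIPconst3 A (3 * s₁) (3 * s₂) (3 * s₃) < 1 ∧
    ∀ i : ℕ,
      eucNorm (x - xs i) ≤
        (Real.sqrt 3 * HiRIPconst3 A (3 * s₁) (3 * s₂) (3 * s₃)) ^ i * eucNorm x +
          (2.18 / (1 - Real.sqrt 3 * HiRIPconst3 A (3 * s₁) (3 * s₂) (3 * s₃))) * eucNorm z := by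
  classical
  obtain ⟨hδ0, hRIP⟩ := hiRIP_mem A (3 * s₁) (3 * s₂) (3 * s₃)
  set δ : ℝ := HiRIPconst3 A (3 * s₁) (3 * s₂) (3 * s₃) with hδdef
  have h3pos : (0:ℝ) < Real.sqrt 3 := Real.sqrt_pos.2 (by norm_num)
  have hs3 : Real.sqrt 3 ^ 2 = 3 := Real.sq_sqrt (by norm_num)
  set ρ : ℝ := Real.sqrt 3 * δ with hρdef
  have hρ0 : 0 ≤ ρ := mul_nonneg h3pos.le hδ0
  have hρ1 : ρ < 1 := by
    have h1 : Real.sqrt 3 * δ < Real.sqrt 3 * (1 / Real.sqrt 3) :=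
      mul_lt_mul_of_pos_left hδ h3pos
    have h2 : Real.sqrt 3 * (1 / Real.sqrt 3) = 1 := by field_simp
    rw [hρdef]; linarith
  have h1δ : (0:ℝ) ≤ 1 + δ := by linarith
  set t : ℝ := Real.sqrt (1 + δ) with htdef
  have ht0 : 0 ≤ t := Real.sqrt_nonneg _
  have ht2 : t ^ 2 = 1 + δ := Real.sq_sqrt h1δ
  set C : ℝ := Real.sqrt 3 * t with hCdef
  have hC0 : 0 ≤ C := mul_nonneg h3pos.le ht0
  have hs3lt : Real.sqrt 3 < 1.7321 := by nlinarith [hs3, h3pos.le]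
  have h3δ : 3 * δ < Real.sqrt 3 := by
    have h1 : δ * Real.sqrt 3 < 1 := by
      exact (lt_div_iff₀ h3pos).1 hδ
    have h2 := mul_lt_mul_of_pos_left h1 h3pos
    have h3 : Real.sqrt 3 * (δ * Real.sqrt 3) = 3 * δ := by
      linear_combination δ * hs3
    rw [mul_one] at h2
    linarith
  have hC : C ≤ 2.18 := by
    have hq : C ^ 2 < 2.18 ^ 2 := by
      rw [hCdef, mul_pow, hs3, ht2]
      have : (2.18:ℝ) ^ 2 = 4.7524 := by norm_num
      linarith
    by_contra hcon
    push_neg at hcon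
    have := pow_lt_pow_left₀ hcon (by norm_num : (0:ℝ) ≤ 2.18) (by norm_num : 2 ≠ 0)
    linarith
  set τ : ℝ := 2.18 / (1 - ρ) with hτdef
  have h1ρ : (0:ℝ) < 1 - ρ := by linarith
  have hτ0 : 0 ≤ τ := by
    rw [hτdef]
    exact div_nonneg (by norm_num) h1ρ.le
  have hτeq : ρ * τ + 2.18 = τ := by
    rw [hτdef]
    field_simp
    ring
  -- all iterates are hierarchically sparse
  have hiter : ∀ n, HiSparse3 s₁ s₂ s₃ (xs n) := by
    intro n
    cases n with
    | zero =>
      rw [h0]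
      refine ⟨?_, fun i₁ => ⟨?_, fun i₂ => ?_⟩⟩ <;>
        simp [Sparse, Function.ne_iff]
    | succ n =>
      obtain ⟨w, hwS, -, hwdef⟩ := hstep n
      refine hiSparse_mono hwS ?_
      intro j hj
      rw [hwdef] at hj
      by_cases hw : w j = 0
      · simp [hw] at hj
      · exact hw
  -- the one-step contraction estimate
  have key : ∀ n, eucNorm (x - xs (n + 1)) ≤ ρ * eucNorm (x - xs n) + C * eucNorm z := by
    intro n
    obtain ⟨w, hwS, hwmin, hwdef⟩ := hstep n
    set a : Fin N₁ × Fin N₂ × Fin N₃ → ℂ :=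
      xs n + A.conjTranspose.mulVec (y - A.mulVec (xs n)) with ha
    have hxn1 : ∀ j, xs (n + 1) j = if w j ≠ 0 then a j else 0 := fun j => by
      rw [hwdef]
    have hS'w : ∀ j, xs (n + 1) j ≠ 0 → xs (n + 1) j = a j := by
      intro j h
      rw [hxn1 j] at h ⊢
      by_cases hw : w j ≠ 0
      · simp [hw]
      · simp [hw] at h
    -- Step A : minimality of xs (n+1) among hierarchically sparse vectors
    have hminA : ∀ w', HiSparse3 s₁ s₂ s₃ w' →
        sqNorm (a - xs (n + 1)) ≤ sqNorm (a - w') := by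
      intro w' hw'
      have h1 : sqNorm (a - xs (n + 1)) ≤ sqNorm (a - w) := by
        unfold sqNorm
        refine Finset.sum_le_sum fun j _ => ?_
        rw [Pi.sub_apply, Pi.sub_apply, hxn1 j]
        by_cases hw : w j = 0
        · simp [hw]
        · simp only [hw, ne_eq, not_false_iff, if_true]
          simp [sub_self]
      have h2 : sqNorm (a - w) ≤ sqNorm (a - w') := by
        rw [← enorm_sq, ← enorm_sq]
        exact pow_le_pow_left₀ (enorm_nonneg _) (hwmin w' hw') 2
      linarith
    -- Step B : support capture
    have hB : (∑ j, if xs (n + 1) j = 0 then ‖a j‖ ^ 2 else 0) ≤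
        (∑ j, if x j = 0 then ‖a j‖ ^ 2 else 0) := by
      have hw' : HiSparse3 s₁ s₂ s₃ (fun j => if x j ≠ 0 then a j else 0) := by
        refine hiSparse_mono hx ?_
        intro j h
        by_cases hxj : x j = 0
        · simp [hxj] at h
        · exact hxj
      have h := hminA _ hw'
      have e1 : sqNorm (a - xs (n + 1)) = ∑ j, if xs (n + 1) j = 0 then ‖a j‖ ^ 2 else 0 := by
        unfold sqNorm
        refine Finset.sum_congr rfl fun j _ => ?_
        rw [Pi.sub_apply]
        by_cases hj : xs (n + 1) j = 0
        · simp [hj]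
        · rw [← hS'w j hj]
          simp [hj]
      have e2 : sqNorm (a - fun j => if x j ≠ 0 then a j else 0) =
          ∑ j, if x j = 0 then ‖a j‖ ^ 2 else 0 := by
        unfold sqNorm
        refine Finset.sum_congr rfl fun j _ => ?_
        rw [Pi.sub_apply]
        by_cases hj : x j = 0
        · simp [hj]
        · simp [hj]
      rw [e1, e2] at h
      exact h
    have hcap : (∑ j, if x j ≠ 0 ∧ xs (n + 1) j = 0 then ‖a j‖ ^ 2 else 0) ≤
        (∑ j, if xs (n + 1) j ≠ 0 ∧ x j = 0 then ‖a j‖ ^ 2 else 0) := by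
      have e1 : (∑ j, if xs (n + 1) j = 0 then ‖a j‖ ^ 2 else 0) =
          (∑ j, if x j ≠ 0 ∧ xs (n + 1) j = 0 then ‖a j‖ ^ 2 else 0) +
            (∑ j, if x j = 0 ∧ xs (n + 1) j = 0 then ‖a j‖ ^ 2 else 0) := by
        rw [← Finset.sum_add_distrib]
        refine Finset.sum_congr rfl fun j _ => ?_
        by_cases h1 : x j = 0 <;> by_cases h2 : xs (n + 1) j = 0 <;> simp [h1, h2]
      have e2 : (∑ j, if x j = 0 then ‖a j‖ ^ 2 else 0) =
          (∑ j, if xs (n + 1) j ≠ 0 ∧ x j = 0 then ‖a j‖ ^ 2 else 0) +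
            (∑ j, if x j = 0 ∧ xs (n + 1) j = 0 then ‖a j‖ ^ 2 else 0) := by
        rw [← Finset.sum_add_distrib]
        refine Finset.sum_congr rfl fun j _ => ?_
        by_cases h1 : x j = 0 <;> by_cases h2 : xs (n + 1) j = 0 <;> simp [h1, h2]
      rw [e1, e2] at hB
      linarith
    -- Step C : the sqrt(3) geometric estimate
    set α : ℝ := Real.sqrt (∑ j, if x j ≠ 0 ∧ xs (n + 1) j = 0 then ‖x j - a j‖ ^ 2 else 0)
      with hαdef
    set β : ℝ := Real.sqrt (∑ j, if xs (n + 1) j ≠ 0 ∧ x j ≠ 0 then ‖x j - a j‖ ^ 2 else 0)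
      with hβdef
    set γ : ℝ := Real.sqrt (∑ j, if xs (n + 1) j ≠ 0 ∧ x j = 0 then ‖x j - a j‖ ^ 2 else 0)
      with hγdef
    have hα0 : 0 ≤ α := Real.sqrt_nonneg _
    have hβ0 : 0 ≤ β := Real.sqrt_nonneg _
    have hγ0 : 0 ≤ γ := Real.sqrt_nonneg _
    have hα2 : α ^ 2 = ∑ j, if x j ≠ 0 ∧ xs (n + 1) j = 0 then ‖x j - a j‖ ^ 2 else 0 :=
      Real.sq_sqrt (Finset.sum_nonneg fun j _ => by split <;> positivity)
    have hβ2 : β ^ 2 = ∑ j, if xs (n + 1) j ≠ 0 ∧ x j ≠ 0 then ‖x j - a j‖ ^ 2 else 0 :=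
      Real.sq_sqrt (Finset.sum_nonneg fun j _ => by split <;> positivity)
    have hγ2 : γ ^ 2 = ∑ j, if xs (n + 1) j ≠ 0 ∧ x j = 0 then ‖x j - a j‖ ^ 2 else 0 :=
      Real.sq_sqrt (Finset.sum_nonneg fun j _ => by split <;> positivity)
    have hv_decomp : sqNorm (x - xs (n + 1)) =
        (∑ j, if xs (n + 1) j ≠ 0 then ‖x j - a j‖ ^ 2 else 0) +
          (∑ j, if x j ≠ 0 ∧ xs (n + 1) j = 0 then ‖x j‖ ^ 2 else 0) := by
      unfold sqNorm
      rw [← Finset.sum_add_distrib]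
      refine Finset.sum_congr rfl fun j _ => ?_
      rw [Pi.sub_apply]
      by_cases h2 : xs (n + 1) j = 0
      · by_cases h1 : x j = 0 <;> simp [h1, h2]
      · rw [← hS'w j h2]
        simp [h2]
    have hsplit1 : (∑ j, if xs (n + 1) j ≠ 0 then ‖x j - a j‖ ^ 2 else 0) = β ^ 2 + γ ^ 2 := by
      rw [hβ2, hγ2, ← Finset.sum_add_distrib]
      refine Finset.sum_congr rfl fun j _ => ?_
      by_cases h1 : x j = 0 <;> by_cases h2 : xs (n + 1) j = 0 <;> simp [h1, h2]
    have hsec : (∑ j, if x j ≠ 0 ∧ xs (n + 1) j = 0 then ‖x j‖ ^ 2 else 0) ≤ (α + γ) ^ 2 := by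
      set p : Fin N₁ × Fin N₂ × Fin N₃ → ℂ :=
        fun j => if x j ≠ 0 ∧ xs (n + 1) j = 0 then x j - a j else 0 with hpdef
      set q : Fin N₁ × Fin N₂ × Fin N₃ → ℂ :=
        fun j => if x j ≠ 0 ∧ xs (n + 1) j = 0 then a j else 0 with hqdef
      have h1 : (∑ j, if x j ≠ 0 ∧ xs (n + 1) j = 0 then ‖x j‖ ^ 2 else 0) = sqNorm (p + q) := by
        unfold sqNorm
        refine Finset.sum_congr rfl fun j _ => ?_
        rw [Pi.add_apply, hpdef, hqdef]
        by_cases hc : x j ≠ 0 ∧ xs (n + 1) j = 0 <;> simp [hc]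
      have h3 : eucNorm p = α := by
        rw [hαdef, eucNorm]
        congr 1
        unfold sqNorm
        refine Finset.sum_congr rfl fun j _ => ?_
        rw [hpdef]
        by_cases hc : x j ≠ 0 ∧ xs (n + 1) j = 0 <;> simp [hc]
      have h4 : eucNorm q ≤ γ := by
        have e1 : sqNorm q = ∑ j, if x j ≠ 0 ∧ xs (n + 1) j = 0 then ‖a j‖ ^ 2 else 0 := by
          unfold sqNorm
          refine Finset.sum_congr rfl fun j _ => ?_
          rw [hqdef]
          by_cases hc : x j ≠ 0 ∧ xs (n + 1) j = 0 <;> simp [hc]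
        have e2 : γ ^ 2 = ∑ j, if xs (n + 1) j ≠ 0 ∧ x j = 0 then ‖a j‖ ^ 2 else 0 := by
          rw [hγ2]
          refine Finset.sum_congr rfl fun j _ => ?_
          by_cases hc : xs (n + 1) j ≠ 0 ∧ x j = 0
          · rw [if_pos hc, if_pos hc, hc.2]
            simp
          · simp [hc]
        rw [eucNorm]
        have : sqNorm q ≤ γ ^ 2 := by
          rw [e1, e2]
          exact hcap
        calc Real.sqrt (sqNorm q) ≤ Real.sqrt (γ ^ 2) := Real.sqrt_le_sqrt this
          _ = γ := by rw [Real.sqrt_sq hγ0]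
      have h2 : eucNorm (p + q) ≤ α + γ := by
        calc eucNorm (p + q) ≤ eucNorm p + eucNorm q := enorm_add_le p q
          _ ≤ α + γ := by rw [h3]; linarith
      calc (∑ j, if x j ≠ 0 ∧ xs (n + 1) j = 0 then ‖x j‖ ^ 2 else 0)
          = sqNorm (p + q) := h1
        _ = eucNorm (p + q) ^ 2 := (enorm_sq _).symm
        _ ≤ (α + γ) ^ 2 := pow_le_pow_left₀ (enorm_nonneg _) h2 2
    set gT : Fin N₁ × Fin N₂ × Fin N₃ → ℂ :=
      fun j => if x j ≠ 0 ∨ xs (n + 1) j ≠ 0 then x j - a j else 0 with hgTdef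
    have hgT : sqNorm gT = α ^ 2 + β ^ 2 + γ ^ 2 := by
      rw [hα2, hβ2, hγ2, ← Finset.sum_add_distrib, ← Finset.sum_add_distrib]
      unfold sqNorm
      refine Finset.sum_congr rfl fun j _ => ?_
      rw [hgTdef]
      by_cases h1 : x j = 0 <;> by_cases h2 : xs (n + 1) j = 0 <;> simp [h1, h2]
    have hv3 : sqNorm (x - xs (n + 1)) ≤ 3 * sqNorm gT := by
      rw [hv_decomp, hsplit1, hgT]
      nlinarith [hsec, hα0, hβ0, hγ0, sq_nonneg (2 * α - γ), sq_nonneg β]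
    have henormv : eucNorm (x - xs (n + 1)) ≤ Real.sqrt 3 * eucNorm gT := by
      rw [eucNorm, eucNorm, ← Real.sqrt_mul (by norm_num : (0:ℝ) ≤ 3)]
      exact Real.sqrt_le_sqrt hv3
    -- Step D : bounding the restricted error via RIP
    set u : Fin N₁ × Fin N₂ × Fin N₃ → ℂ := x - xs n with hudef
    have hyy : y - A.mulVec (xs n) = A.mulVec u + z := by
      rw [hy, hudef, Matrix.mulVec_sub]
      abel
    have hadecomp : a = xs n +
        (A.conjTranspose.mulVec (A.mulVec u) + A.conjTranspose.mulVec z) := by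
      rw [ha, hyy, Matrix.mulVec_add]
    have hg : ∀ j, x j - a j =
        (u j - A.conjTranspose.mulVec (A.mulVec u) j) - A.conjTranspose.mulVec z j := by
      intro j
      rw [hadecomp, hudef]
      simp only [Pi.add_apply, Pi.sub_apply]
      ring
    set pT : Fin N₁ × Fin N₂ × Fin N₃ → ℂ :=
      fun j => if x j ≠ 0 ∨ xs (n + 1) j ≠ 0 then
        u j - A.conjTranspose.mulVec (A.mulVec u) j else 0 with hpTdef
    set qT : Fin N₁ × Fin N₂ × Fin N₃ → ℂ :=
      fun j => if x j ≠ 0 ∨ xs (n + 1) j ≠ 0 then A.conjTranspose.mulVec z j else 0 with hqTdef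
    have hsplitg : gT = pT - qT := by
      funext j
      rw [hgTdef, hpTdef, hqTdef, Pi.sub_apply]
      by_cases hc : x j ≠ 0 ∨ xs (n + 1) j ≠ 0
      · simp only [hc, if_true]
        rw [hg j]
      · simp [hc]
    have hsuppu : ∀ j, u j ≠ 0 → x j ≠ 0 ∨ xs n j ≠ 0 := by
      intro j hj
      by_contra hcon
      push_neg at hcon
      apply hj
      rw [hudef, Pi.sub_apply, hcon.1, hcon.2, sub_zero]
    -- hierarchical sparsity of all relevant vectors
    have hsparse_generic : ∀ v : Fin N₁ × Fin N₂ × Fin N₃ → ℂ,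
        (∀ j, v j ≠ 0 → x j ≠ 0 ∨ xs n j ≠ 0 ∨ xs (n + 1) j ≠ 0) →
        HiSparse3 (3 * s₁) (3 * s₂) (3 * s₃) v := fun v hv =>
      hiSparse_union3 hx (hiter n) (hiter (n + 1)) hv
    have hpT_supp : ∀ j, pT j ≠ 0 → x j ≠ 0 ∨ xs n j ≠ 0 ∨ xs (n + 1) j ≠ 0 := by
      intro j hj
      rw [hpTdef] at hj
      by_cases hc : x j ≠ 0 ∨ xs (n + 1) j ≠ 0
      · rcases hc with h | h
        · exact Or.inl h
        · exact Or.inr (Or.inr h)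
      · simp [hc] at hj
    have hu_supp : ∀ j, u j ≠ 0 → x j ≠ 0 ∨ xs n j ≠ 0 ∨ xs (n + 1) j ≠ 0 := by
      intro j hj
      rcases hsuppu j hj with h | h
      · exact Or.inl h
      · exact Or.inr (Or.inl h)
    -- d1 : the (I - AᴴA) term
    have hd1 : eucNorm pT ≤ δ * eucNorm u := by
      have h1 : rdot pT (u - A.conjTranspose.mulVec (A.mulVec u)) = sqNorm pT := by
        rw [rdot_congr_right (g' := pT) ?_, rdot_self]
        intro j hj
        rw [Pi.sub_apply]
        rw [hpTdef] at hj ⊢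
        by_cases hc : x j ≠ 0 ∨ xs (n + 1) j ≠ 0
        · simp [hc]
        · simp [hc] at hj
      have h2 : rdot pT (u - A.conjTranspose.mulVec (A.mulVec u)) =
          rdot pT u - rdot (A.mulVec pT) (A.mulVec u) := by
        rw [rdot_sub_right, rdot_adjoint]
      have hcomb : ∀ c d : ℝ, HiSparse3 (3 * s₁) (3 * s₂) (3 * s₃)
          ((c : ℂ) • pT + (d : ℂ) • u) := by
        intro c d
        refine hsparse_generic _ fun j hj => ?_
        by_cases hp : pT j = 0
        · by_cases hu' : u j = 0
          · exfalso
            apply hj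
            simp [hp, hu']
          · exact hu_supp j hu'
        · exact hpT_supp j hp
      have h3 := rip_inner hRIP hcomb
      have h4 : sqNorm pT ≤ δ * eucNorm pT * eucNorm u := by
        rw [← h1, h2]
        calc rdot pT u - rdot (A.mulVec pT) (A.mulVec u)
            ≤ |rdot pT u - rdot (A.mulVec pT) (A.mulVec u)| := le_abs_self _
          _ ≤ δ * eucNorm pT * eucNorm u := h3
      rcases (enorm_nonneg pT).lt_or_eq with he | he
      · rw [← enorm_sq] at h4
        have h5 : eucNorm pT * eucNorm pT ≤ (δ * eucNorm u) * eucNorm pT := by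
          calc eucNorm pT * eucNorm pT = eucNorm pT ^ 2 := (sq (eucNorm pT)).symm
            _ ≤ δ * eucNorm pT * eucNorm u := h4
            _ = (δ * eucNorm u) * eucNorm pT := by ring
        exact le_of_mul_le_mul_right h5 he
      · rw [← he]
        exact mul_nonneg hδ0 (enorm_nonneg u)
    -- d2 : the noise term
    have hd2 : eucNorm qT ≤ t * eucNorm z := by
      have hqT_sparse : HiSparse3 (3 * s₁) (3 * s₂) (3 * s₃) qT := by
        refine hsparse_generic _ fun j hj => ?_
        rw [hqTdef] at hj
        by_cases hc : x j ≠ 0 ∨ xs (n + 1) j ≠ 0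
        · rcases hc with h | h
          · exact Or.inl h
          · exact Or.inr (Or.inr h)
        · simp [hc] at hj
      have h1 : rdot qT (A.conjTranspose.mulVec z) = sqNorm qT := by
        rw [rdot_congr_right (g' := qT) ?_, rdot_self]
        intro j hj
        rw [hqTdef] at hj ⊢
        by_cases hc : x j ≠ 0 ∨ xs (n + 1) j ≠ 0
        · simp [hc]
        · simp [hc] at hj
      have h2 : rdot qT (A.conjTranspose.mulVec z) = rdot (A.mulVec qT) z := rdot_adjoint A qT z
      have h3 : eucNorm (A.mulVec qT) ≤ t * eucNorm qT := by
        rw [htdef]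
        exact rip_upper hδ0 (fun v hv => (hRIP v hv).2) hqT_sparse
      have h4 : sqNorm qT ≤ t * eucNorm qT * eucNorm z := by
        rw [← h1, h2]
        calc rdot (A.mulVec qT) z ≤ eucNorm (A.mulVec qT) * eucNorm z := rdot_le _ _
          _ ≤ t * eucNorm qT * eucNorm z :=
            mul_le_mul_of_nonneg_right h3 (enorm_nonneg z)
      rcases (enorm_nonneg qT).lt_or_eq with he | he
      · rw [← enorm_sq] at h4
        have h5 : eucNorm qT * eucNorm qT ≤ (t * eucNorm z) * eucNorm qT := by
          calc eucNorm qT * eucNorm qT = eucNorm qT ^ 2 := (sq (eucNorm qT)).symm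
            _ ≤ t * eucNorm qT * eucNorm z := h4
            _ = (t * eucNorm z) * eucNorm qT := by ring
        exact le_of_mul_le_mul_right h5 he
      · rw [← he]
        exact mul_nonneg ht0 (enorm_nonneg z)
    -- combine
    have hgTbound : eucNorm gT ≤ δ * eucNorm u + t * eucNorm z := by
      calc eucNorm gT = eucNorm (pT - qT) := by rw [hsplitg]
        _ ≤ eucNorm pT + eucNorm qT := enorm_sub_le _ _
        _ ≤ δ * eucNorm u + t * eucNorm z := add_le_add hd1 hd2
    calc eucNorm (x - xs (n + 1)) ≤ Real.sqrt 3 * eucNorm gT := henormv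
      _ ≤ Real.sqrt 3 * (δ * eucNorm u + t * eucNorm z) :=
        mul_le_mul_of_nonneg_left hgTbound h3pos.le
      _ = ρ * eucNorm u + C * eucNorm z := by rw [hρdef, hCdef]; ring
  -- conclusion by induction
  refine ⟨hρ1, ?_⟩
  intro i
  induction i with
  | zero =>
    rw [h0, sub_zero, pow_zero, one_mul]
    linarith [mul_nonneg hτ0 (enorm_nonneg z)]
  | succ n ih =>
    have h1 := key n
    have h2 : ρ * eucNorm (x - xs n) ≤ ρ * (ρ ^ n * eucNorm x + τ * eucNorm z) :=
      mul_le_mul_of_nonneg_left ih hρ0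
    have h3 : C * eucNorm z ≤ 2.18 * eucNorm z :=
      mul_le_mul_of_nonneg_right hC (enorm_nonneg z)
    have h5 : (ρ * τ + 2.18) * eucNorm z = τ * eucNorm z := by rw [hτeq]
    rw [pow_succ]
    nlinarith [h1, h2, h3, h5]
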